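/- The closure of the set D_f of finite persistence diagrams in (D^∞, OT_∞) is exactly D₀^∞, the set of persistence diagrams having, for every r > 0, only finitely many points at distance greater than r from the diagonal. -/

import Mathlib

noncomputable section

open MeasureTheory Metric Set Filter Topology ENNReal
open scoped Classical

/-- The plane with the Euclidean distance. -/
abbrev Pt : Type := EuclideanSpace ℝ (Fin 2)

/-- Build a point of the plane from coordinates. -/
def mk2 (a b : ℝ) : Pt := (WithLp.equiv 2 (Fin 2 → ℝ)).symm ![a, b]

/-- The open upper half-plane Ω = {(t₁,t₂) : t₂ > t₁}. -/
def UHP : Set Pt := {x | x 0 < x 1}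

/-- The diagonal ∂Ω = {(t,t)}. -/
def Diag : Set Pt := {x | x 0 = x 1}

/-- Ω̄ = Ω ∪ ∂Ω. -/
def UHPbar : Set Pt := UHP ∪ Diag

/-- Distance from a point to the diagonal. -/
def persDist (x : Pt) : ℝ := infDist x Diag

/-- p-th total persistence Pers_p(μ) = ∫_Ω d(x,∂Ω)^p dμ(x). -/
def Pers (p : ℝ) (μ : Measure Pt) : ℝ≥0∞ :=
  ∫⁻ x in UHP, ENNReal.ofReal (persDist x ^ p) ∂μ

/-- μ ∈ M^p : a measure supported on Ω with finite p-th persistence. -/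
def MemMp (p : ℝ) (μ : Measure Pt) : Prop := μ UHPᶜ = 0 ∧ Pers p μ < ⊤

/-- Admissible partial transport plans between μ and ν: measures on Ω̄ × Ω̄ whose
marginals restricted to Ω are μ and ν. -/
def Adm (μ ν : Measure Pt) : Set (Measure (Pt × Pt)) :=
  {π | π ((UHPbar ×ˢ UHPbar)ᶜ) = 0 ∧
    (∀ A : Set Pt, MeasurableSet A → A ⊆ UHP → π (A ×ˢ univ) = μ A) ∧
    (∀ B : Set Pt, MeasurableSet B → B ⊆ UHP → π (univ ×ˢ B) = ν B)}

/-- Cost C_p(π) = ∬ d(x,y)^p dπ(x,y). -/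
def Cost (p : ℝ) (π : Measure (Pt × Pt)) : ℝ≥0∞ :=
  ∫⁻ z, ENNReal.ofReal (dist z.1 z.2 ^ p) ∂π

/-- OT_p(μ,ν)^p, as an extended real. -/
def OTe (p : ℝ) (μ ν : Measure Pt) : ℝ≥0∞ := ⨅ π ∈ Adm μ ν, Cost p π

/-- The optimal partial transport distance OT_p(μ,ν). -/
def OT (p : ℝ) (μ ν : Measure Pt) : ℝ := (OTe p μ ν ^ (1 / p)).toReal

/-- Optimal plans. -/
def OptSet (p : ℝ) (μ ν : Measure Pt) : Set (Measure (Pt × Pt)) :=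
  {π | π ∈ Adm μ ν ∧ Cost p π = OTe p μ ν}

/-- Vague convergence of measures on Ω: convergence of integrals of continuous
functions compactly supported in Ω. -/
def VagueTendsto (μs : ℕ → Measure Pt) (μ : Measure Pt) : Prop :=
  ∀ f : Pt → ℝ, Continuous f → HasCompactSupport f → tsupport f ⊆ UHP →
    Tendsto (fun n => ∫ x, f x ∂(μs n)) atTop (𝓝 (∫ x, f x ∂μ))

/-- E_Ω = (Ω̄ × Ω̄) \ (∂Ω × ∂Ω). -/
def EOm : Set (Pt × Pt) := (UHPbar ×ˢ UHPbar) \ (Diag ×ˢ Diag)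

/-- Vague convergence of plans on E_Ω. -/
def VaguePlanTendsto (πs : ℕ → Measure (Pt × Pt)) (π : Measure (Pt × Pt)) : Prop :=
  ∀ f : Pt × Pt → ℝ, Continuous f → HasCompactSupport f → tsupport f ⊆ EOm →
    Tendsto (fun n => ∫ z, f z ∂(πs n)) atTop (𝓝 (∫ z, f z ∂π))

/-- A persistence diagram: an ℕ-valued point measure Σ_{x ∈ X} n_x δ_x with
X ⊆ Ω locally finite in Ω. -/
def IsDiagram (μ : Measure Pt) : Prop :=
  ∃ (X : Set Pt) (n : Pt → ℕ), X ⊆ UHP ∧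
    (∀ x ∈ UHP, ∃ U ∈ 𝓝 x, (X ∩ U).Finite) ∧
    μ = Measure.sum (fun x : X => (n x.1 : ℝ≥0∞) • Measure.dirac (x.1 : Pt))

/-- Support of a measure on Pt × Pt. -/
def msupp (π : Measure (Pt × Pt)) : Set (Pt × Pt) := {z | ∀ U ∈ 𝓝 z, π U ≠ 0}

/-- Support of a measure on Pt. -/
def suppM (μ : Measure Pt) : Set Pt := {x | ∀ U ∈ 𝓝 x, μ U ≠ 0}

/-- Bottleneck cost of a plan: sup of d(x,y) over the support. -/
def CostInf (π : Measure (Pt × Pt)) : ℝ≥0∞ :=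
  ⨆ z ∈ msupp π, ENNReal.ofReal (dist z.1 z.2)

/-- The bottleneck (∞) optimal partial transport distance, as extended real. -/
def OTinfE (μ ν : Measure Pt) : ℝ≥0∞ := ⨅ π ∈ Adm μ ν, CostInf π

/-- μ ∈ M^∞ : support at bounded distance from the diagonal. -/
def MemMinf (μ : Measure Pt) : Prop :=
  μ UHPᶜ = 0 ∧ ∃ C : ℝ, ∀ x ∈ suppM μ, persDist x ≤ C

/-- A partial matching between two indexed families: a bijection between
subsets of the index sets; unmatched points are sent to the diagonal. -/
structure Matching (ι κ : Type*) where
  I : Set ι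
  J : Set κ
  e : I ≃ J

/-- Cost of a partial matching for d_p (as the p-th power, extended real). -/
def mCost (p : ℝ) {ι κ : Type*} (x : ι → Pt) (y : κ → Pt) (m : Matching ι κ) : ℝ≥0∞ :=
  (∑' i : m.I, ENNReal.ofReal (dist (x i.1) (y (m.e i).1) ^ p))
  + (∑' i : ↥(m.Iᶜ), ENNReal.ofReal (persDist (x i.1) ^ p))
  + (∑' j : ↥(m.Jᶜ), ENNReal.ofReal (persDist (y j.1) ^ p))

/-- Bottleneck cost of a partial matching. -/
def mCostInf {ι κ : Type*} (x : ι → Pt) (y : κ → Pt) (m : Matching ι κ) : ℝ≥0∞ :=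
  (⨆ i : m.I, ENNReal.ofReal (dist (x i.1) (y (m.e i).1)))
  ⊔ (⨆ i : ↥(m.Iᶜ), ENNReal.ofReal (persDist (x i.1)))
  ⊔ (⨆ j : ↥(m.Jᶜ), ENNReal.ofReal (persDist (y j.1)))

/-- The point measure associated to an indexed family of points. -/
def famMeasure {ι : Type*} (x : ι → Pt) : Measure Pt :=
  Measure.sum (fun i => Measure.dirac (x i))

/-- The weighted measure μ^p, with density d(x,∂Ω)^p with respect to μ. -/
def wgt (p : ℝ) (μ : Measure Pt) : Measure Pt :=
  μ.withDensity (fun x => ENNReal.ofReal (persDist x ^ p))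

/-- The quotient space Ω̃ = Ω ⊔ {∂Ω}. -/
def Qt : Type := Option ↥UHP

/-- The quotient metric ρ on Ω̃. -/
def ρQ : Qt → Qt → ℝ
  | some x, some y => min (dist (x : Pt) (y : Pt)) (persDist x + persDist y)
  | some x, none => persDist x
  | none, some y => persDist y
  | none, none => 0

/-- The quotient metric ρ viewed on the plane, all diagonal points being
identified. -/
def ρP (x y : Pt) : ℝ :=
  if x ∈ Diag then (if y ∈ Diag then 0 else persDist y)
  else if y ∈ Diag then persDist x
  else min (dist x y) (persDist x + persDist y)

/-- Couplings with full (equal-mass) marginals. -/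
def Coup (μ ν : Measure Pt) : Set (Measure (Pt × Pt)) :=
  {π | π.map Prod.fst = μ ∧ π.map Prod.snd = ν}

/-- The p-Wasserstein distance (to the p) for the quotient metric ρ. -/
def WpE (p : ℝ) (μ ν : Measure Pt) : ℝ≥0∞ :=
  ⨅ π ∈ Coup μ ν, ∫⁻ z, ENNReal.ofReal (ρP z.1 z.2 ^ p) ∂π



section Aux

lemma persDist_cont : Continuous persDist := continuous_infDist_pt _

lemma coord_cont (i : Fin 2) : Continuous fun x : Pt => x i :=
  (continuous_apply i).comp (PiLp.continuous_ofLp 2 fun _ : Fin 2 => ℝ)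

lemma isOpen_UHP : IsOpen UHP := isOpen_lt (coord_cont 0) (coord_cont 1)

lemma isClosed_Diag : IsClosed Diag := isClosed_eq (coord_cont 0) (coord_cont 1)

lemma measurableSet_UHPbar : MeasurableSet UHPbar :=
  isOpen_UHP.measurableSet.union isClosed_Diag.measurableSet

lemma mk2_apply0 (a b : ℝ) : mk2 a b 0 = a := by
  simp [mk2, PiLp.toLp_apply]

lemma mk2_apply1 (a b : ℝ) : mk2 a b 1 = b := by
  simp [mk2, PiLp.toLp_apply]

lemma diag_nonempty : Diag.Nonempty := ⟨mk2 0 0, by simp [Diag, mk2_apply0, mk2_apply1]⟩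

lemma persDist_diag {x : Pt} (h : x ∈ Diag) : persDist x = 0 := infDist_zero_of_mem h

lemma persDist_lip (x y : Pt) : persDist x ≤ persDist y + dist x y :=
  infDist_le_infDist_add_dist

lemma le_persDist {x : Pt} {b : ℝ} (h : ∀ y ∈ Diag, b ≤ dist x y) : b ≤ persDist x := by
  by_contra hlt
  push_neg at hlt
  obtain ⟨y, hy, hdy⟩ := (infDist_lt_iff diag_nonempty).mp hlt
  exact absurd (h y hy) (not_le.mpr hdy)

/-- The projection to the diagonal. -/
def qd (x : Pt) : Pt := mk2 ((x 0 + x 1) / 2) ((x 0 + x 1) / 2)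

lemma qd_mem_Diag (x : Pt) : qd x ∈ Diag := by simp [Diag, qd, mk2_apply0, mk2_apply1]

lemma qd_cont : Continuous qd := by
  refine (PiLp.continuous_toLp 2 fun _ : Fin 2 => ℝ).comp ?_
  refine continuous_pi fun i => ?_
  fin_cases i <;>
    simpa [Matrix.cons_val_zero, Matrix.cons_val_one, Matrix.head_cons] using
      (((coord_cont 0).add (coord_cont 1)).div_const 2)

lemma abs_sub_le_two_persDist (x : Pt) : |x 1 - x 0| ≤ 2 * persDist x := by
  have h : |x 1 - x 0| / 2 ≤ persDist x := by
    refine le_persDist fun y hy => ?_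
    have hy' : y 0 = y 1 := hy
    rw [EuclideanSpace.dist_eq]
    have hnn : (0:ℝ) ≤ dist (x 0) (y 0) ^ 2 + dist (x 1) (y 1) ^ 2 := by positivity
    have key : (|x 1 - x 0| / 2) ^ 2 ≤ ∑ i, dist (x i) (y i) ^ 2 := by
      rw [Fin.sum_univ_two, Real.dist_eq, Real.dist_eq, ← hy']
      have h2 : (|x 1 - x 0| / 2) ^ 2 = (x 1 - x 0) ^ 2 / 4 := by
        rw [div_pow, sq_abs]; norm_num
      rw [h2, sq_abs, sq_abs]
      nlinarith [sq_nonneg (x 0 + x 1 - 2 * y 0), sq_nonneg (x 0 - x 1)]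
    calc |x 1 - x 0| / 2 = √((|x 1 - x 0| / 2) ^ 2) := by
          rw [Real.sqrt_sq (by positivity)]
      _ ≤ √(∑ i, dist (x i) (y i) ^ 2) := Real.sqrt_le_sqrt key
  linarith

lemma dist_qd_le (x : Pt) : dist (qd x) x ≤ 2 * persDist x := by
  have h1 : dist (qd x) x ≤ |x 1 - x 0| := by
    rw [EuclideanSpace.dist_eq, Fin.sum_univ_two, Real.dist_eq, Real.dist_eq]
    simp only [qd, mk2_apply0, mk2_apply1]
    have key : |(x 0 + x 1) / 2 - x 0| ^ 2 + |(x 0 + x 1) / 2 - x 1| ^ 2 ≤ |x 1 - x 0| ^ 2 := by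
      rw [sq_abs, sq_abs, sq_abs]; nlinarith [sq_nonneg (x 1 - x 0)]
    calc √(|(x 0 + x 1) / 2 - x 0| ^ 2 + |(x 0 + x 1) / 2 - x 1| ^ 2)
        ≤ √(|x 1 - x 0| ^ 2) := Real.sqrt_le_sqrt key
      _ = |x 1 - x 0| := Real.sqrt_sq (abs_nonneg _)
  exact h1.trans (abs_sub_le_two_persDist x)

lemma msupp_compl_null (π : Measure (Pt × Pt)) : π (msupp π)ᶜ = 0 := by
  obtain ⟨S, hScount, hSsub, hSeq⟩ := TopologicalSpace.isOpen_sUnion_countable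
    {U : Set (Pt × Pt) | IsOpen U ∧ π U = 0} (fun U hU => hU.1)
  have hnull : π (⋃₀ S) = 0 := (measure_sUnion_null_iff hScount).2 fun U hU => (hSsub hU).2
  refine measure_mono_null ?_ hnull
  intro z hz
  simp only [msupp, mem_compl_iff, mem_setOf_eq] at hz
  push_neg at hz
  obtain ⟨U, hU, hU0⟩ := hz
  obtain ⟨O, hOsub, hOopen, hzO⟩ := _root_.mem_nhds_iff.mp hU
  rw [hSeq]
  exact ⟨O, ⟨hOopen, measure_mono_null hOsub hU0⟩, hzO⟩

lemma msupp_subset {π : Measure (Pt × Pt)} {S : Set (Pt × Pt)} (hS : IsClosed S)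
    (h : π Sᶜ = 0) : msupp π ⊆ S := by
  intro z hz
  by_contra hzS
  exact hz Sᶜ (hS.isOpen_compl.mem_nhds hzS) h

end Aux

/-- the closure of the set D_f of finite diagrams in (D^∞, OT_∞)
is D₀^∞, the set of diagrams with finitely many points of persistence > r for
every r > 0. -/
theorem stmt16 (a : Measure Pt) (ha : IsDiagram a) (hb : MemMinf a) :
    (∃ as : ℕ → Measure Pt,
        (∀ n, IsDiagram (as n) ∧ as n univ < ⊤) ∧
        Tendsto (fun n => OTinfE (as n) a) atTop (𝓝 0)) ↔
      (∀ r : ℝ, 0 < r → a {x | r < persDist x} < ⊤) := by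
  have haU : a UHPᶜ = 0 := hb.1
  constructor
  · rintro ⟨as, hfin, htend⟩ r hr
    by_contra htop
    rw [not_lt, top_le_iff] at htop
    have hrpos : (0 : ℝ≥0∞) < ENNReal.ofReal (r / 3) := ENNReal.ofReal_pos.mpr (by linarith)
    obtain ⟨n, hn⟩ := (htend.eventually_lt_const hrpos).exists
    obtain ⟨π, hπA, hπc⟩ : ∃ π ∈ Adm (as n) a, CostInf π < ENNReal.ofReal (r / 3) := by
      rw [OTinfE, iInf_lt_iff] at hn
      obtain ⟨π, h1⟩ := hn
      rw [iInf_lt_iff] at h1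
      obtain ⟨h2, h3⟩ := h1
      exact ⟨π, h2, h3⟩
    obtain ⟨hπ0, hπ1, hπ2⟩ := hπA
    set B : Set Pt := UHP ∩ {x | r < persDist x} with hBdef
    have hBmeas : MeasurableSet B :=
      (isOpen_UHP.inter (isOpen_lt continuous_const persDist_cont)).measurableSet
    have haB : a B = ⊤ := by
      refine top_le_iff.mp ?_
      calc (⊤ : ℝ≥0∞) = a {x | r < persDist x} := htop.symm
        _ ≤ a (B ∪ UHPᶜ) := by
            refine measure_mono fun x hx => ?_
            by_cases hxU : x ∈ UHP
            · exact Or.inl ⟨hxU, hx⟩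
            · exact Or.inr hxU
        _ ≤ a B + a UHPᶜ := measure_union_le _ _
        _ = a B := by rw [haU, add_zero]
    set A : Set Pt := UHP ∩ {x | r / 2 < persDist x} with hAdef
    have hAmeas : MeasurableSet A :=
      (isOpen_UHP.inter (isOpen_lt continuous_const persDist_cont)).measurableSet
    have hsub : univ ×ˢ B ⊆ (A ×ˢ univ) ∪ ((msupp π)ᶜ ∪ (UHPbar ×ˢ UHPbar)ᶜ) := by
      rintro ⟨x, y⟩ ⟨-, hyB⟩
      by_cases hm : (x, y) ∈ msupp π
      swap
      · exact Or.inr (Or.inl hm)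
      by_cases hbar : (x, y) ∈ UHPbar ×ˢ UHPbar
      swap
      · exact Or.inr (Or.inr hbar)
      left
      have hd : dist x y < r / 3 := by
        have h1 : ENNReal.ofReal (dist x y) ≤ CostInf π :=
          le_iSup₂ (f := fun (z : Pt × Pt) (_ : z ∈ msupp π) =>
            ENNReal.ofReal (dist z.1 z.2)) (x, y) hm
        exact (ENNReal.ofReal_lt_ofReal_iff (by linarith)).mp (lt_of_le_of_lt h1 hπc)
      have hpy : r < persDist y := hyB.2
      have hpx : r / 2 < persDist x := by
        have hl := persDist_lip y x
        rw [dist_comm] at hl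
        linarith
      have hxU : x ∈ UHP := by
        rcases hbar.1 with h | h
        · exact h
        · exfalso
          have := persDist_diag h
          linarith
      exact ⟨⟨hxU, hpx⟩, mem_univ _⟩
    have hB2 : π (univ ×ˢ B) = a B := hπ2 B hBmeas inter_subset_left
    have hA1 : π (A ×ˢ univ) = as n A := hπ1 A hAmeas inter_subset_left
    have htopA : (⊤ : ℝ≥0∞) ≤ as n A := by
      calc (⊤ : ℝ≥0∞) = π (univ ×ˢ B) := by rw [hB2, haB]
        _ ≤ π ((A ×ˢ univ) ∪ ((msupp π)ᶜ ∪ (UHPbar ×ˢ UHPbar)ᶜ)) := measure_mono hsub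
        _ ≤ π (A ×ˢ univ) + π ((msupp π)ᶜ ∪ (UHPbar ×ˢ UHPbar)ᶜ) := measure_union_le _ _
        _ ≤ π (A ×ˢ univ) + (π (msupp π)ᶜ + π (UHPbar ×ˢ UHPbar)ᶜ) :=
            add_le_add le_rfl (measure_union_le _ _)
        _ = as n A := by rw [msupp_compl_null, hπ0, hA1, add_zero, add_zero]
    have hlt : as n A < ⊤ := lt_of_le_of_lt (measure_mono (subset_univ A)) (hfin n).2
    exact absurd (lt_of_le_of_lt htopA hlt) (lt_irrefl _)
  · intro h
    obtain ⟨X, nn, hXU, hloc, hae⟩ := ha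
    set T : ℕ → Set Pt := fun k => {x | 1 / (k + 1 : ℝ) < persDist x} with hTdef
    have hTmeas : ∀ k, MeasurableSet (T k) := fun k =>
      (isOpen_lt continuous_const persDist_cont).measurableSet
    refine ⟨fun k => a.restrict (T k), fun k => ⟨?_, ?_⟩, ?_⟩
    · refine ⟨X, fun x => if x ∈ T k then nn x else 0, hXU, hloc, ?_⟩
      beta_reduce
      rw [hae, Measure.restrict_sum _ (hTmeas k)]
      congr 1
      funext x
      rw [Measure.restrict_smul, MeasureTheory.restrict_dirac' (hTmeas k)]
      by_cases hx : (x : Pt) ∈ T k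
      · simp [hx]
      · simp [hx]
    · beta_reduce
      rw [Measure.restrict_apply_univ]
      exact h _ (by positivity)
    · have key : ∀ k : ℕ, OTinfE (a.restrict (T k)) a ≤ ENNReal.ofReal (2 / (k + 1 : ℝ)) := by
        intro k
        have hm1 : Measurable fun x : Pt => (x, x) := measurable_id.prodMk measurable_id
        have hm2 : Measurable fun x : Pt => (qd x, x) := qd_cont.measurable.prodMk measurable_id
        set π1 := Measure.map (fun x : Pt => (x, x)) (a.restrict (T k)) with hπ1def
        set π2 := Measure.map (fun x : Pt => (qd x, x)) (a.restrict (T k)ᶜ) with hπ2def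
        have hrTk : ∀ E : Set Pt, MeasurableSet E → E ⊆ UHPᶜ → a.restrict (T k) E = 0 := by
          intro E hE hEsub
          rw [Measure.restrict_apply hE]
          exact measure_mono_null (inter_subset_left.trans hEsub) haU
        have hrTkc : ∀ E : Set Pt, MeasurableSet E → E ⊆ UHPᶜ → a.restrict (T k)ᶜ E = 0 := by
          intro E hE hEsub
          rw [Measure.restrict_apply hE]
          exact measure_mono_null (inter_subset_left.trans hEsub) haU
        have hUbar : MeasurableSet (UHPbar ×ˢ UHPbar) :=
          measurableSet_UHPbar.prod measurableSet_UHPbar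
        have hAdm : π1 + π2 ∈ Adm (a.restrict (T k)) a := by
          refine ⟨?_, ?_, ?_⟩
          · rw [Measure.add_apply, hπ1def, hπ2def,
              Measure.map_apply hm1 hUbar.compl, Measure.map_apply hm2 hUbar.compl]
            have e1 : a.restrict (T k) ((fun x : Pt => (x, x)) ⁻¹' (UHPbar ×ˢ UHPbar)ᶜ) = 0 := by
              refine hrTk _ (hm1 hUbar.compl) fun x hx => fun hxU => ?_
              exact hx ⟨Or.inl hxU, Or.inl hxU⟩
            have e2 : a.restrict (T k)ᶜ ((fun x : Pt => (qd x, x)) ⁻¹' (UHPbar ×ˢ UHPbar)ᶜ) = 0 := by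
              refine hrTkc _ (hm2 hUbar.compl) fun x hx => fun hxU => ?_
              exact hx ⟨Or.inr (qd_mem_Diag x), Or.inl hxU⟩
            rw [e1, e2, add_zero]
          · intro A hA hAsub
            rw [Measure.add_apply, hπ1def, hπ2def,
              Measure.map_apply hm1 (hA.prod MeasurableSet.univ),
              Measure.map_apply hm2 (hA.prod MeasurableSet.univ)]
            have e1 : (fun x : Pt => (x, x)) ⁻¹' (A ×ˢ univ) = A := by
              ext x; simp [Set.mem_prod]
            have e2 : a.restrict (T k)ᶜ ((fun x : Pt => (qd x, x)) ⁻¹' (A ×ˢ univ)) = 0 := by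
              refine measure_mono_null (t := ∅) (fun x hx => ?_) measure_empty
              have hqU : qd x 0 < qd x 1 := hAsub hx.1
              exact absurd hqU (not_lt.mpr (le_of_eq (qd_mem_Diag x).symm))
            rw [e1, e2, add_zero]
          · intro B hB hBsub
            rw [Measure.add_apply, hπ1def, hπ2def,
              Measure.map_apply hm1 (MeasurableSet.univ.prod hB),
              Measure.map_apply hm2 (MeasurableSet.univ.prod hB)]
            have e1 : (fun x : Pt => (x, x)) ⁻¹' (univ ×ˢ B) = B := by
              ext x; simp [Set.mem_prod]
            have e2 : (fun x : Pt => (qd x, x)) ⁻¹' (univ ×ˢ B) = B := by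
              ext x; simp [Set.mem_prod]
            rw [e1, e2, Measure.restrict_apply hB, Measure.restrict_apply hB, ← Set.diff_eq,
              measure_inter_add_diff B (hTmeas k)]
        refine le_trans (iInf₂_le (π1 + π2) hAdm) ?_
        have hcpos : (0 : ℝ) ≤ 2 / (k + 1 : ℝ) := by positivity
        set D : Set (Pt × Pt) := {z | dist z.1 z.2 ≤ 2 / (k + 1 : ℝ)} with hDdef
        have hDclosed : IsClosed D :=
          isClosed_le (continuous_dist.comp (continuous_fst.prodMk continuous_snd))
            continuous_const
        have hDnull : (π1 + π2) Dᶜ = 0 := by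
          rw [Measure.add_apply, hπ1def, hπ2def,
            Measure.map_apply hm1 hDclosed.measurableSet.compl,
            Measure.map_apply hm2 hDclosed.measurableSet.compl]
          have e1 : (fun x : Pt => (x, x)) ⁻¹' Dᶜ = ∅ := by
            ext x
            simp only [mem_preimage, mem_compl_iff, hDdef, mem_setOf_eq, dist_self,
              mem_empty_iff_false, iff_false, not_not]
            exact hcpos
          have e2 : a.restrict (T k)ᶜ ((fun x : Pt => (qd x, x)) ⁻¹' Dᶜ) = 0 := by
            rw [Measure.restrict_apply (hm2 hDclosed.measurableSet.compl)]
            refine measure_mono_null (t := ∅) (fun x hx => ?_) measure_empty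
            obtain ⟨hxD, hxT⟩ := hx
            have hple : persDist x ≤ 1 / (k + 1 : ℝ) := not_lt.mp hxT
            have : dist (qd x) x ≤ 2 / (k + 1 : ℝ) := by
              have := dist_qd_le x
              have h2 : 2 * persDist x ≤ 2 * (1 / (k + 1 : ℝ)) := by linarith
              calc dist (qd x) x ≤ 2 * persDist x := dist_qd_le x
                _ ≤ 2 * (1 / (k + 1 : ℝ)) := h2
                _ = 2 / (k + 1 : ℝ) := by ring
            exact hxD this
          rw [e1, measure_empty, e2, add_zero]
        have hsupp : msupp (π1 + π2) ⊆ D := msupp_subset hDclosed hDnull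
        refine iSup₂_le fun z hz => ?_
        exact ENNReal.ofReal_le_ofReal (hsupp hz)
      refine tendsto_of_tendsto_of_tendsto_of_le_of_le tendsto_const_nhds ?_
        (fun k => zero_le') key
      have hreal : Tendsto (fun k : ℕ => (2 : ℝ) / (k + 1)) atTop (𝓝 0) :=
        tendsto_const_nhds.div_atTop
          (tendsto_atTop_add_const_right _ 1 tendsto_natCast_atTop_atTop)
      simpa using ENNReal.tendsto_ofReal hreal
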